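/- Eliminating the fourth color turns a 1-dependent 4-coloring into a 3-dependent 3-coloring: identify the colors of Fin 4 with {0,1,2,3} and define φ : (ℤ → Fin 4) → (ℤ → Fin 3) by φ(x)(n) = x(n) if x(n) ∈ {0,1,2}, and φ(x)(n) = the smallest element of {0,1,2} ∖ {x(n−1), x(n+1)} if x(n) = 3. If μ is a probability measure on ℤ → Fin 4 that is stationary, 1-dependent, and a 4-coloring, then the pushforward measure φ_*μ on ℤ → Fin 3 is stationary, 3-dependent, and a 3-coloring. -/

import Mathlib

open MeasureTheory ProbabilityTheory

/-- Configurations: colorings of `ℤ` with `q` colors, with the product σ-algebra. -/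
abbrev Config (q : ℕ) : Type := ℤ → Fin q

/-- The left shift on configurations: `shift x n = x (n + 1)`. -/
def shift {q : ℕ} (x : Config q) : Config q := fun n => x (n + 1)

/-- A measure on configurations is stationary if it is invariant under the shift. -/
def IsShiftStationary {q : ℕ} (μ : Measure (Config q)) : Prop :=
  μ.map shift = μ

/-- A measure on configurations is a (proper) `q`-coloring if almost surely adjacent
coordinates take different values. -/
def IsColoring {q : ℕ} (μ : Measure (Config q)) : Prop :=
  ∀ᵐ x ∂μ, ∀ n : ℤ, x n ≠ x (n + 1)

/-- The σ-algebra on configurations generated by the coordinates in `A ⊆ ℤ`. -/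
def coordSigma (q : ℕ) (A : Set ℤ) : MeasurableSpace (Config q) :=
  ⨆ a ∈ A, MeasurableSpace.comap (fun x : Config q => x a) inferInstance

/-- A measure on configurations is `k`-dependent if the σ-algebras generated by the
coordinates in any two sets `A, B ⊆ ℤ` with `|a - b| > k` for all `a ∈ A`, `b ∈ B`
are independent. -/
def KDependent {q : ℕ} (k : ℕ) (μ : Measure (Config q)) : Prop :=
  ∀ A B : Set ℤ, (∀ a ∈ A, ∀ b ∈ B, (k : ℤ) < |a - b|) →
    Indep (coordSigma q A) (coordSigma q B) μ

/-- Elimination of the fourth color: keep `x n` if it lies in `{0,1,2}`; if `x n = 3`,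
replace it by the smallest element of `{0,1,2}` different from `x (n-1)` and `x (n+1)`
(colors of `Fin 4` and `Fin 3` identified with `{0,1,2,3}` and `{0,1,2}` via their
natural values). -/
def elimFourth (x : Config 4) : Config 3 := fun n =>
  if h : (x n : ℕ) < 3 then ⟨(x n : ℕ), h⟩
  else if (x (n - 1) : ℕ) ≠ 0 ∧ (x (n + 1) : ℕ) ≠ 0 then 0
  else if (x (n - 1) : ℕ) ≠ 1 ∧ (x (n + 1) : ℕ) ≠ 1 then 1
  else 2

/-- local rule -/
def elimF (p c s : Fin 4) : Fin 3 :=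
  if h : (c : ℕ) < 3 then ⟨(c : ℕ), h⟩
  else if (p : ℕ) ≠ 0 ∧ (s : ℕ) ≠ 0 then 0
  else if (p : ℕ) ≠ 1 ∧ (s : ℕ) ≠ 1 then 1
  else 2

lemma elimFourth_eq (x : Config 4) (n : ℤ) :
    elimFourth x n = elimF (x (n - 1)) (x n) (x (n + 1)) := rfl

lemma elimF_ne : ∀ a b c d : Fin 4, a ≠ b → b ≠ c → c ≠ d →
    elimF a b c ≠ elimF b c d := by decide

lemma measurable_elimFourth : Measurable elimFourth := by
  apply measurable_pi_lambda
  intro n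
  have : (fun x : Config 4 => elimFourth x n)
      = (fun p : Fin 4 × Fin 4 × Fin 4 => elimF p.1 p.2.1 p.2.2) ∘
        (fun x => (x (n - 1), x n, x (n + 1))) := rfl
  rw [this]
  exact (Measurable.of_discrete).comp
    ((measurable_pi_apply _).prodMk ((measurable_pi_apply _).prodMk (measurable_pi_apply _)))

lemma measurable_shift {q : ℕ} : Measurable (shift (q := q)) :=
  measurable_pi_lambda _ fun n => measurable_pi_apply _

lemma elimFourth_shift : elimFourth ∘ shift = shift ∘ elimFourth := by
  funext x n
  show elimF (shift x (n - 1)) (shift x n) (shift x (n + 1))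
      = elimF (x (n + 1 - 1)) (x (n + 1)) (x (n + 1 + 1))
  simp only [shift]
  congr 2 <;> ring_nf

lemma coordSigma_le (q : ℕ) (A : Set ℤ) :
    coordSigma q A ≤ MeasurableSpace.pi := by
  apply iSup₂_le
  intro a _
  exact (measurable_pi_apply a).comap_le

lemma measurable_coord_coordSigma {q : ℕ} {A : Set ℤ} {a : ℤ} (ha : a ∈ A) :
    Measurable[coordSigma q A] (fun x : Config q => x a) := by
  rw [measurable_iff_comap_le]
  exact le_iSup₂ (f := fun a (_ : a ∈ A) =>
    MeasurableSpace.comap (fun x : Config q => x a) inferInstance) a ha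

/-- expansion of a set by 1 -/
def expand (A : Set ℤ) : Set ℤ := {b | ∃ a ∈ A, |b - a| ≤ 1}

lemma measurable_elimFourth_coordSigma {A : Set ℤ} :
    @Measurable _ _ (coordSigma 4 (expand A)) (coordSigma 3 A) elimFourth := by
  rw [measurable_iff_comap_le, coordSigma, MeasurableSpace.comap_iSup]
  apply iSup_le; intro a
  rw [MeasurableSpace.comap_iSup]
  apply iSup_le; intro ha
  rw [MeasurableSpace.comap_comp]
  have h : Measurable[coordSigma 4 (expand A)] (fun x : Config 4 => elimFourth x a) := by
    have : (fun x : Config 4 => elimFourth x a)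
        = (fun p : Fin 4 × Fin 4 × Fin 4 => elimF p.1 p.2.1 p.2.2) ∘
          (fun x => (x (a - 1), x a, x (a + 1))) := rfl
    rw [this]
    have h1 : (a - 1) ∈ expand A := ⟨a, ha, by simp⟩
    have h2 : a ∈ expand A := ⟨a, ha, by simp⟩
    have h3 : (a + 1) ∈ expand A := ⟨a, ha, by simp⟩
    exact (Measurable.of_discrete).comp
      ((measurable_coord_coordSigma h1).prodMk
        ((measurable_coord_coordSigma h2).prodMk (measurable_coord_coordSigma h3)))
  exact h.comap_le


/-- Eliminating the fourth color turns a stationary 1-dependent 4-coloring into a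
stationary 3-dependent 3-coloring. -/
theorem elimFourth_three_dependent_three_coloring (μ : Measure (Config 4))
    (hprob : IsProbabilityMeasure μ) (hstat : IsShiftStationary μ)
    (hdep : KDependent 1 μ) (hcol : IsColoring μ) :
    IsShiftStationary (μ.map elimFourth) ∧ KDependent 3 (μ.map elimFourth) ∧
      IsColoring (μ.map elimFourth) := by
  refine ⟨?_, ?_, ?_⟩
  · -- stationary
    unfold IsShiftStationary
    rw [Measure.map_map measurable_shift measurable_elimFourth, ← elimFourth_shift,
      ← Measure.map_map measurable_elimFourth measurable_shift, hstat]
  · -- 3-dependent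
    intro A B hAB
    rw [Indep_iff]
    intro t1 t2 ht1 ht2
    have hdist : ∀ a ∈ expand A, ∀ b ∈ expand B, (1 : ℤ) < |a - b| := by
      rintro a' ⟨a, ha, hd1⟩ b' ⟨b, hb, hd2⟩
      have := hAB a ha b hb
      rw [lt_abs] at this ⊢
      rw [abs_le] at hd1 hd2
      omega
    have hind := hdep (expand A) (expand B) hdist
    rw [Indep_iff] at hind
    have hm1 : MeasurableSet[coordSigma 4 (expand A)] (elimFourth ⁻¹' t1) :=
      measurable_elimFourth_coordSigma ht1
    have hm2 : MeasurableSet[coordSigma 4 (expand B)] (elimFourth ⁻¹' t2) :=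
      measurable_elimFourth_coordSigma ht2
    have hm1' : MeasurableSet t1 := coordSigma_le 3 A _ ht1
    have hm2' : MeasurableSet t2 := coordSigma_le 3 B _ ht2
    rw [Measure.map_apply measurable_elimFourth (hm1'.inter hm2'),
      Measure.map_apply measurable_elimFourth hm1',
      Measure.map_apply measurable_elimFourth hm2',
      Set.preimage_inter]
    exact hind _ _ hm1 hm2
  · -- coloring
    unfold IsColoring
    have hms : MeasurableSet {y : Config 3 | ∀ n : ℤ, y n ≠ y (n + 1)} := by
      have : {y : Config 3 | ∀ n : ℤ, y n ≠ y (n + 1)}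
          = ⋂ n : ℤ, ⋃ c : Fin 3, ⋃ c' : Fin 3, ⋃ _ : c ≠ c',
              ((fun y : Config 3 => y n) ⁻¹' {c}) ∩ ((fun y : Config 3 => y (n + 1)) ⁻¹' {c'}) := by
        ext y
        simp only [Set.mem_setOf_eq, Set.mem_iInter, Set.mem_iUnion, Set.mem_inter_iff,
          Set.mem_preimage, Set.mem_singleton_iff]
        constructor
        · intro h n; exact ⟨y n, y (n + 1), h n, rfl, rfl⟩
        · rintro h n
          obtain ⟨c, c', hne, rfl, rfl⟩ := h n
          exact hne
      rw [this]
      exact MeasurableSet.iInter fun n => MeasurableSet.iUnion fun c =>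
        MeasurableSet.iUnion fun c' => MeasurableSet.iUnion fun _ =>
          ((measurable_pi_apply n (measurableSet_singleton c)).inter
            (measurable_pi_apply (n + 1) (measurableSet_singleton c')))
    refine (ae_map_iff measurable_elimFourth.aemeasurable hms).mpr ?_
    filter_upwards [hcol] with x hx
    intro n
    have h1 : x (n - 1) ≠ x n := by
      have := hx (n - 1); rwa [show n - 1 + 1 = n by ring] at this
    have h2 : x n ≠ x (n + 1) := hx n
    have h3 : x (n + 1) ≠ x (n + 1 + 1) := hx (n + 1)
    have e1 : elimFourth x n = elimF (x (n - 1)) (x n) (x (n + 1)) := rfl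
    have e2 : elimFourth x (n + 1) = elimF (x n) (x (n + 1)) (x (n + 1 + 1)) := by
      rw [elimFourth_eq, show n + 1 - 1 = n by ring]
    rw [e1, e2]
    exact elimF_ne _ _ _ _ h1 h2 h3
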